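/- Let u: ℕ* → K be completely multiplicative into a field K such that u(p) = 0 for only finitely many primes, and suppose there exists an integer d such that the set {p prime : u(p)^d ∉ {0_K, 1_K}} is finite and has cardinality at least 2. Then (u(n))_{n≥1} is not k-automatic for any k ≥ 2. -/

import Mathlib

/-- The subword complexity of a sequence: the number of distinct factors of length `n`. -/
noncomputable def subwordComplexity {α : Type*} (u : ℕ → α) (n : ℕ) : ℕ :=
  (Set.range fun start => fun i : Fin n => u (start + (i : ℕ))).ncard

/-- A sequence is ultimately periodic. -/
def UltimatelyPeriodic {α : Type*} (u : ℕ → α) : Prop :=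
  ∃ N T : ℕ, 0 < T ∧ ∀ n ≥ N, u (n + T) = u n

/-- A sequence is `k`-automatic iff its `k`-kernel is finite. -/
def IsAutomatic {α : Type*} (k : ℕ) (u : ℕ → α) : Prop :=
  {v : ℕ → α | ∃ e r : ℕ, r < k ^ e ∧ v = fun n => u (k ^ e * n + r)}.Finite

def BigO (f g : ℕ → ℕ) : Prop := ∃ C N : ℕ, ∀ n ≥ N, f n ≤ C * g n

def BigOmega (f g : ℕ → ℕ) : Prop := ∃ c N : ℕ, 0 < c ∧ ∀ n ≥ N, g n ≤ c * f n

def BigTheta (f g : ℕ → ℕ) : Prop := BigO f g ∧ BigOmega f g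


section AuxMult

variable {K : Type*} [Field K]

lemma v_pow_mul (v : ℕ → K)
    (hvmul : ∀ m n : ℕ, 0 < m → 0 < n → v (m * n) = v m * v n)
    (x : ℕ) (hx : 0 < x) :
    ∀ (i : ℕ) (y : ℕ), 0 < y → v (x ^ i * y) = v x ^ i * v y := by
  intro i
  induction i with
  | zero => intro y hy; simp
  | succ i ih =>
      intro y hy
      have h1 : x ^ (i + 1) * y = x * (x ^ i * y) := by ring
      rw [h1, hvmul x (x ^ i * y) hx (by positivity), ih y hy, pow_succ]
      ring

lemma v_clean (v : ℕ → K) (hv1 : v 1 = 1)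
    (hvmul : ∀ m n : ℕ, 0 < m → 0 < n → v (m * n) = v m * v n) :
    ∀ R : ℕ, 0 < R → (∀ s : ℕ, s.Prime → s ∣ R → v s = 1) → v R = 1 := by
  intro R
  induction R using Nat.strong_induction_on with
  | _ R ih =>
    intro hR hcl
    rcases eq_or_ne R 1 with rfl | hne
    · exact hv1
    · obtain ⟨s, hs, hsd⟩ := Nat.exists_prime_and_dvd hne
      obtain ⟨c, rfl⟩ := hsd
      have hc : 0 < c := Nat.pos_of_ne_zero (by rintro rfl; simp at hR)
      rw [hvmul s c hs.pos hc, hcl s hs (dvd_mul_right s c), one_mul]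
      exact ih c ((lt_mul_iff_one_lt_left hc).mpr hs.one_lt) hc
        (fun s' hs' hd => hcl s' hs' (hd.mul_left s))

lemma key_lemma (v : ℕ → K) (hv1 : v 1 = 1)
    (hvmul : ∀ m n : ℕ, 0 < m → 0 < n → v (m * n) = v m * v n)
    (SF : Finset ℕ) (hSprime : ∀ s ∈ SF, s.Prime)
    (hSone : ∀ s : ℕ, s.Prime → s ∉ SF → v s = 1)
    (P : ℕ) (hP : P.Prime) (hPS : P ∈ SF)
    (hA0 : v P ≠ 0) (hA1 : v P ≠ 1)
    (o : ℕ) (ho : o ∈ SF) (hoP : o ≠ P)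
    (k : ℕ) (hk : 2 ≤ k) (hk2 : 2 ≤ ordCompl[P] k)
    (hker : {w : ℕ → K | ∃ e r : ℕ, r < k ^ e ∧ w = fun n => v (k ^ e * n + r + 1)}.Finite) :
    False := by
  classical
  have hk0 : k ≠ 0 := by omega
  set A := v P with hAdef
  set κ := k.factorization P with hκdef
  set k' := ordCompl[P] k with hk'def
  have hkfact : P ^ κ * k' = k := Nat.ordProj_mul_ordCompl_eq_self k P
  have hPk' : ¬ P ∣ k' := Nat.not_dvd_ordCompl hP hk0
  have hcop : Nat.Coprime P k' := (Nat.Prime.coprime_iff_not_dvd hP).mpr hPk'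
  set F := hker.toFinset with hFdef
  set M := F.card with hMdef
  have hM1 : 1 ≤ M := by
    have hmem : (fun n => v (k ^ 0 * n + 0 + 1)) ∈ F := by
      rw [hFdef, Set.Finite.mem_toFinset]
      exact ⟨0, 0, by norm_num, rfl⟩
    have : F.Nonempty := ⟨_, hmem⟩
    exact Finset.card_pos.mpr this
  set m := M + 5 with hmdef
  set SE := SF.erase P with hSEdef
  set 𝔪 := ∏ s ∈ SE, s with h𝔪def
  have hSEprime : ∀ s ∈ SE, s.Prime := fun s hs => hSprime s (Finset.mem_of_mem_erase hs)
  have hSEneP : ∀ s ∈ SE, s ≠ P := fun s hs => Finset.ne_of_mem_erase hs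
  have h𝔪P : Nat.Coprime P 𝔪 :=
    Nat.Coprime.prod_right fun s hs =>
      (Nat.coprime_primes hP (hSEprime s hs)).mpr (Ne.symm (hSEneP s hs))
  have h𝔪pos : 0 < 𝔪 := Finset.prod_pos fun s hs => (hSEprime s hs).pos
  have ho𝔪 : o ∣ 𝔪 := Finset.dvd_prod_of_mem _ (Finset.mem_erase.mpr ⟨hoP, ho⟩)
  have h𝔪2 : 2 ≤ 𝔪 := le_trans (hSprime o ho).two_le (Nat.le_of_dvd h𝔪pos ho𝔪)
  set e := P ^ m * 𝔪 with hedef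
  have hePos : 0 < e := Nat.mul_pos (pow_pos hP.pos m) h𝔪pos
  have hek' : P ^ m * 𝔪 ≤ k' ^ e := le_of_lt (Nat.lt_pow_self (n := e) (by omega))
  have hke : k ^ e = P ^ (κ * e) * k' ^ e := by
    rw [← hkfact, mul_pow, ← pow_mul]
  set N := P ^ (κ * e + m) * 𝔪 with hNdef
  have hNpos : 0 < N := Nat.mul_pos (pow_pos hP.pos _) h𝔪pos
  have hNcop : Nat.Coprime (P ^ (κ * e + m)) 𝔪 := Nat.Coprime.pow_left _ h𝔪P
  have hNk : N ≤ k ^ e := by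
    rw [hke, hNdef, pow_add]
    calc P ^ (κ * e) * P ^ m * 𝔪 = P ^ (κ * e) * (P ^ m * 𝔪) := by ring
      _ ≤ P ^ (κ * e) * k' ^ e := Nat.mul_le_mul_left _ hek'
  -- construct the X t
  have hXex : ∀ t : Fin (M + 1), ∃ Xt : ℕ, 1 ≤ Xt ∧ Xt ≤ k ^ e ∧
      Xt ≡ (t : ℕ) * P ^ (1 + κ * e) [MOD P ^ (κ * e + m)] ∧ Xt ≡ 1 [MOD 𝔪] := by
    intro t
    obtain ⟨c, hc1, hc2⟩ := Nat.chineseRemainder hNcop ((t : ℕ) * P ^ (1 + κ * e)) 1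
    have hdvd1 : P ^ (κ * e + m) ∣ N := ⟨𝔪, hNdef⟩
    have hdvd2 : 𝔪 ∣ N := ⟨P ^ (κ * e + m), by rw [hNdef]; ring⟩
    have hm1 : (c % N) ≡ (t : ℕ) * P ^ (1 + κ * e) [MOD P ^ (κ * e + m)] := by
      show (c % N) % _ = _ % _
      rw [Nat.mod_mod_of_dvd c hdvd1]
      exact hc1
    have hm2 : (c % N) ≡ 1 [MOD 𝔪] := by
      show (c % N) % 𝔪 = 1 % 𝔪
      rw [Nat.mod_mod_of_dvd c hdvd2]
      exact hc2
    refine ⟨c % N, ?_, le_trans (le_of_lt (Nat.mod_lt c hNpos)) hNk, hm1, hm2⟩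
    by_contra hcon
    have h0 : c % N = 0 := by omega
    have h1 : (0 : ℕ) % 𝔪 = 1 % 𝔪 := by rw [← h0]; exact hm2
    rw [Nat.zero_mod, Nat.mod_eq_of_lt (by omega : 1 < 𝔪)] at h1
    omega
  choose X hX1 hXk hXmod hX𝔪 using hXex
  have hXP : ∀ t, P ^ (κ * e) ∣ X t := by
    intro t
    have h1 : X t ≡ (t : ℕ) * P ^ (1 + κ * e) [MOD P ^ (κ * e)] :=
      (hXmod t).of_dvd (pow_dvd_pow _ (by omega))
    have h2 : (t : ℕ) * P ^ (1 + κ * e) ≡ 0 [MOD P ^ (κ * e)] :=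
      Nat.modEq_zero_iff_dvd.mpr ⟨(t : ℕ) * P, by rw [pow_add]; ring⟩
    exact Nat.modEq_zero_iff_dvd.mp (h1.trans h2)
  set σ : Fin (M + 1) → ℕ := fun t => X t / P ^ (κ * e) with hσdef
  have hXσ : ∀ t, P ^ (κ * e) * σ t = X t := fun t => Nat.mul_div_cancel' (hXP t)
  have hσpos : ∀ t, 1 ≤ σ t := by
    intro t
    rcases Nat.eq_zero_or_pos (σ t) with h | h
    · exfalso
      have h2 := hXσ t
      rw [h, mul_zero] at h2
      have := hX1 t
      omega
    · exact h
  have hσmod : ∀ t, σ t ≡ (t : ℕ) * P [MOD P ^ m] := by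
    intro t
    have h1 := Nat.modEq_iff_dvd.mp (hXmod t)
    -- h1 : (↑(P ^ (κ*e+m)) : ℤ) ∣ ↑((t:ℕ) * P ^ (1+κ*e)) - ↑(X t)
    rw [Nat.modEq_iff_dvd]
    have h2 : (X t : ℤ) = ((P ^ (κ * e) : ℕ) : ℤ) * (σ t : ℤ) := by
      exact_mod_cast congrArg (fun x : ℕ => (x : ℤ)) (hXσ t).symm
    have h3 : (((t : ℕ) * P ^ (1 + κ * e) : ℕ) : ℤ) - (X t : ℤ)
        = ((P ^ (κ * e) : ℕ) : ℤ) * ((((t : ℕ) * P : ℕ) : ℤ) - (σ t : ℤ)) := by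
      rw [h2]; push_cast; ring
    have h4 : ((P ^ (κ * e + m) : ℕ) : ℤ) = ((P ^ (κ * e) : ℕ) : ℤ) * ((P ^ m : ℕ) : ℤ) := by
      push_cast; rw [pow_add]
    rw [h4, h3] at h1
    have h5 : ((P ^ (κ * e) : ℕ) : ℤ) ≠ 0 :=
      Nat.cast_ne_zero.mpr (pow_ne_zero _ hP.ne_zero)
    exact (mul_dvd_mul_iff_left h5).mp h1
  have hσSE : ∀ t, ∀ s ∈ SE, ¬ s ∣ σ t := by
    intro t s hs hdvd
    have hsX : s ∣ X t := by
      rw [← hXσ t]; exact hdvd.mul_left _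
    have hs𝔪 : s ∣ 𝔪 := Finset.dvd_prod_of_mem _ hs
    have h1 : X t ≡ 1 [MOD s] := (hX𝔪 t).of_dvd hs𝔪
    have h2 : X t % s = 1 % s := h1
    have h3 : X t % s = 0 := by
      have := Nat.modEq_zero_iff_dvd.mpr hsX
      simpa [Nat.ModEq] using this
    have hs2 : 2 ≤ s := (hSEprime s hs).two_le
    rw [Nat.mod_eq_of_lt (by omega : 1 < s)] at h2
    omega
  -- the main contradiction derivation
  have main : ∀ a b : Fin (M + 1), (a : ℕ) < (b : ℕ) →
      ((fun n => v (k ^ e * n + X a)) = (fun n => v (k ^ e * n + X b))) → False := by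
    intro a b hab heq
    set Δ := (b : ℕ) - (a : ℕ) with hΔdef
    have hΔpos : 0 < Δ := by omega
    have hΔM : Δ ≤ M := by have := b.isLt; omega
    set ν := Δ.factorization P with hνdef
    set Δ₀ := ordCompl[P] Δ with hΔ₀def
    have hΔfact : P ^ ν * Δ₀ = Δ := Nat.ordProj_mul_ordCompl_eq_self Δ P
    have hPΔ₀ : ¬ P ∣ Δ₀ := Nat.not_dvd_ordCompl hP (by omega)
    have hΔ₀pos : 0 < Δ₀ := Nat.ordCompl_pos P (by omega)
    have hνM : ν ≤ M := by
      rcases Nat.eq_zero_or_pos ν with h0 | h1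
      · omega
      · have h1' : P ^ ν ∣ Δ := Nat.ordProj_dvd Δ P
        have h2' : P ^ ν ≤ Δ := Nat.le_of_dvd hΔpos h1'
        have h3' : 2 ^ ν ≤ P ^ ν := Nat.pow_le_pow_left hP.two_le ν
        have h4' : ν < 2 ^ ν := Nat.lt_two_pow_self (n := ν)
        omega
    set c0 := ν + 1 with hc0def
    have hEval : ∀ L : ℕ, c0 + 1 ≤ L → L + 1 ≤ m →
        A ^ (κ * e) * A ^ L = A ^ (κ * e) * A ^ c0 := by
      intro L hL1 hL2
      haveI : NeZero (P ^ (L + 1)) := ⟨pow_ne_zero _ hP.ne_zero⟩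
      have hucop : Nat.Coprime (k' ^ e) (P ^ (L + 1)) := Nat.Coprime.pow e (L + 1) hcop.symm
      have hUnit : IsUnit ((k' ^ e : ℕ) : ZMod (P ^ (L + 1))) :=
        (ZMod.isUnit_iff_coprime _ _).mpr hucop
      set ZU : ZMod (P ^ (L + 1)) := ((k' ^ e : ℕ) : ZMod (P ^ (L + 1))) with hZU
      set C : ZMod (P ^ (L + 1)) :=
        ((P ^ L : ℕ) : ZMod (P ^ (L + 1))) - (((a : ℕ) * P : ℕ) : ZMod (P ^ (L + 1))) with hC
      set α := ZU⁻¹ * C with hα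
      obtain ⟨n, hn1, hn2⟩ :=
        Nat.chineseRemainder (Nat.Coprime.pow_left (L + 1) h𝔪P) α.val 0
      set R := k' ^ e * n + σ a with hRdef
      set R' := k' ^ e * n + σ b with hR'def
      have hRpos : 0 < R := by have := hσpos a; omega
      have hR'pos : 0 < R' := by have := hσpos b; omega
      have hcastn : ((n : ℕ) : ZMod (P ^ (L + 1))) = α := by
        have h1 : ((n : ℕ) : ZMod (P ^ (L + 1))) = ((α.val : ℕ) : ZMod (P ^ (L + 1))) :=
          (ZMod.natCast_eq_natCast_iff _ _ _).mpr hn1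
        rw [h1]
        exact ZMod.natCast_rightInverse α
      have hZUα : ZU * α = C := by
        rw [hα, ← mul_assoc, ZMod.mul_inv_of_unit ZU hUnit, one_mul]
      have hσacast : ((σ a : ℕ) : ZMod (P ^ (L + 1))) = (((a : ℕ) * P : ℕ) : ZMod (P ^ (L + 1))) :=
        (ZMod.natCast_eq_natCast_iff _ _ _).mpr ((hσmod a).of_dvd (pow_dvd_pow P (by omega)))
      have hσbcast : ((σ b : ℕ) : ZMod (P ^ (L + 1))) = (((b : ℕ) * P : ℕ) : ZMod (P ^ (L + 1))) :=
        (ZMod.natCast_eq_natCast_iff _ _ _).mpr ((hσmod b).of_dvd (pow_dvd_pow P (by omega)))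
      have hRcast : ((R : ℕ) : ZMod (P ^ (L + 1))) = ((P ^ L : ℕ) : ZMod (P ^ (L + 1))) := by
        have hsplit : ((R : ℕ) : ZMod (P ^ (L + 1)))
            = ZU * ((n : ℕ) : ZMod (P ^ (L + 1))) + ((σ a : ℕ) : ZMod (P ^ (L + 1))) := by
          rw [hRdef, hZU]; push_cast; ring
        rw [hsplit, hcastn, hZUα, hσacast, hC]; ring
      have hRmod : R ≡ P ^ L [MOD P ^ (L + 1)] := (ZMod.natCast_eq_natCast_iff _ _ _).mp hRcast
      have hPLdvd : P ^ L ∣ R := by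
        have h1 : R ≡ P ^ L [MOD P ^ L] := hRmod.of_dvd (pow_dvd_pow P (Nat.le_succ L))
        have h2 : (P : ℕ) ^ L ≡ 0 [MOD P ^ L] := Nat.modEq_zero_iff_dvd.mpr dvd_rfl
        exact Nat.modEq_zero_iff_dvd.mp (h1.trans h2)
      have hnPL1 : ¬ P ^ (L + 1) ∣ R := by
        intro hdvd
        have h1 : R ≡ 0 [MOD P ^ (L + 1)] := Nat.modEq_zero_iff_dvd.mpr hdvd
        have h2 : P ^ (L + 1) ∣ P ^ L := Nat.modEq_zero_iff_dvd.mp (hRmod.symm.trans h1)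
        have h3 : P ^ (L + 1) ≤ P ^ L := Nat.le_of_dvd (pow_pos hP.pos L) h2
        have h4 : P ^ L < P ^ (L + 1) := Nat.pow_lt_pow_right hP.one_lt (Nat.lt_succ_self L)
        exact absurd h3 (not_le.mpr h4)
      obtain ⟨R₀, hR₀⟩ := hPLdvd
      have hPR₀ : ¬ P ∣ R₀ := by
        rintro ⟨c, rfl⟩
        exact hnPL1 ⟨c, by rw [hR₀]; ring⟩
      have hR₀pos : 0 < R₀ := by
        rcases Nat.eq_zero_or_pos R₀ with h | h
        · rw [h, mul_zero] at hR₀; omega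
        · exact h
      -- R' analysis
      have hR'cast : ((R' : ℕ) : ZMod (P ^ (L + 1)))
          = ((P ^ L + Δ * P : ℕ) : ZMod (P ^ (L + 1))) := by
        have hsplit : ((R' : ℕ) : ZMod (P ^ (L + 1)))
            = ZU * ((n : ℕ) : ZMod (P ^ (L + 1))) + ((σ b : ℕ) : ZMod (P ^ (L + 1))) := by
          rw [hR'def, hZU]; push_cast; ring
        rw [hsplit, hcastn, hZUα, hσbcast, hC]
        have hΔcast : ((Δ : ℕ) : ZMod (P ^ (L + 1)))
            = ((b : ℕ) : ZMod (P ^ (L + 1))) - ((a : ℕ) : ZMod (P ^ (L + 1))) := by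
          rw [hΔdef]; push_cast [Nat.cast_sub (le_of_lt hab)]; ring
        push_cast [hΔcast]
        ring
      have hR'mod1 : R' ≡ P ^ L + Δ * P [MOD P ^ (L + 1)] :=
        (ZMod.natCast_eq_natCast_iff _ _ _).mp hR'cast
      have hR'mod : R' ≡ P ^ L + Δ * P [MOD P ^ (c0 + 1)] :=
        hR'mod1.of_dvd (pow_dvd_pow P (by omega))
      have harith : Δ * P = P ^ c0 * Δ₀ := by
        rw [hc0def, pow_succ, ← hΔfact]; ring
      have hstep : P ^ L + Δ * P ≡ P ^ c0 * Δ₀ [MOD P ^ (c0 + 1)] := by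
        have hz : P ^ L ≡ 0 [MOD P ^ (c0 + 1)] :=
          Nat.modEq_zero_iff_dvd.mpr (pow_dvd_pow P (by omega))
        calc P ^ L + Δ * P ≡ 0 + Δ * P [MOD P ^ (c0 + 1)] := hz.add_right _
          _ = P ^ c0 * Δ₀ := by rw [zero_add, harith]
      have hR'mod2 : R' ≡ P ^ c0 * Δ₀ [MOD P ^ (c0 + 1)] := hR'mod.trans hstep
      have hPc0dvd : P ^ c0 ∣ R' := by
        have h1 : R' ≡ P ^ c0 * Δ₀ [MOD P ^ c0] := hR'mod2.of_dvd (pow_dvd_pow P (Nat.le_succ _))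
        have h2 : P ^ c0 * Δ₀ ≡ 0 [MOD P ^ c0] := Nat.modEq_zero_iff_dvd.mpr (dvd_mul_right _ _)
        exact Nat.modEq_zero_iff_dvd.mp (h1.trans h2)
      have hnPc01 : ¬ P ^ (c0 + 1) ∣ R' := by
        intro hdvd
        have h1 : R' ≡ 0 [MOD P ^ (c0 + 1)] := Nat.modEq_zero_iff_dvd.mpr hdvd
        have h2 : P ^ (c0 + 1) ∣ P ^ c0 * Δ₀ := Nat.modEq_zero_iff_dvd.mp (hR'mod2.symm.trans h1)
        rw [pow_succ] at h2
        have h3 : P ∣ Δ₀ := (mul_dvd_mul_iff_left (pow_ne_zero c0 hP.ne_zero)).mp h2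
        exact hPΔ₀ h3
      obtain ⟨R₀', hR₀'⟩ := hPc0dvd
      have hPR₀' : ¬ P ∣ R₀' := by
        rintro ⟨c, rfl⟩
        exact hnPc01 ⟨c, by rw [hR₀']; ring⟩
      have hR₀'pos : 0 < R₀' := by
        rcases Nat.eq_zero_or_pos R₀' with h | h
        · rw [h, mul_zero] at hR₀'; omega
        · exact h
      -- cleanliness
      have hcleanR : ∀ s ∈ SE, ¬ s ∣ R := by
        intro s hs hdvd
        have hs𝔪 : s ∣ 𝔪 := Finset.dvd_prod_of_mem _ hs
        have hsn : s ∣ n := Nat.modEq_zero_iff_dvd.mp (hn2.of_dvd hs𝔪)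
        have hsσ : s ∣ σ a := by
          have h1 : s ∣ k' ^ e * n := hsn.mul_left _
          have h2 : σ a = R - k' ^ e * n := by rw [hRdef]; omega
          rw [h2]; exact Nat.dvd_sub hdvd h1
        exact hσSE a s hs hsσ
      have hcleanR' : ∀ s ∈ SE, ¬ s ∣ R' := by
        intro s hs hdvd
        have hs𝔪 : s ∣ 𝔪 := Finset.dvd_prod_of_mem _ hs
        have hsn : s ∣ n := Nat.modEq_zero_iff_dvd.mp (hn2.of_dvd hs𝔪)
        have hsσ : s ∣ σ b := by
          have h1 : s ∣ k' ^ e * n := hsn.mul_left _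
          have h2 : σ b = R' - k' ^ e * n := by rw [hR'def]; omega
          rw [h2]; exact Nat.dvd_sub hdvd h1
        exact hσSE b s hs hsσ
      -- values
      have hvR : v R = A ^ L := by
        rw [hR₀, v_pow_mul v hvmul P hP.pos L R₀ hR₀pos]
        have hone : v R₀ = 1 := by
          apply v_clean v hv1 hvmul R₀ hR₀pos
          intro s hsp hsd
          have hsR : s ∣ R := by rw [hR₀]; exact hsd.mul_left _
          have hsP : s ≠ P := by rintro rfl; exact hPR₀ hsd
          have hsSF : s ∉ SF := fun hmem =>
            hcleanR s (Finset.mem_erase.mpr ⟨hsP, hmem⟩) hsR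
          exact hSone s hsp hsSF
        rw [hone, mul_one, hAdef]
      have hvR' : v R' = A ^ c0 := by
        rw [hR₀', v_pow_mul v hvmul P hP.pos c0 R₀' hR₀'pos]
        have hone : v R₀' = 1 := by
          apply v_clean v hv1 hvmul R₀' hR₀'pos
          intro s hsp hsd
          have hsR : s ∣ R' := by rw [hR₀']; exact hsd.mul_left _
          have hsP : s ≠ P := by rintro rfl; exact hPR₀' hsd
          have hsSF : s ∉ SF := fun hmem =>
            hcleanR' s (Finset.mem_erase.mpr ⟨hsP, hmem⟩) hsR
          exact hSone s hsp hsSF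
        rw [hone, mul_one, hAdef]
      -- combine
      have hEq : v (k ^ e * n + X a) = v (k ^ e * n + X b) := congrFun heq n
      have hida : k ^ e * n + X a = P ^ (κ * e) * R := by
        rw [hke, ← hXσ a, hRdef]; ring
      have hidb : k ^ e * n + X b = P ^ (κ * e) * R' := by
        rw [hke, ← hXσ b, hR'def]; ring
      rw [hida, hidb, v_pow_mul v hvmul P hP.pos (κ * e) R hRpos,
        v_pow_mul v hvmul P hP.pos (κ * e) R' hR'pos, hvR, hvR'] at hEq
      exact hEq
    have h2 := hEval (M + 2) (by omega) (by omega)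
    have h3 := hEval (M + 3) (by omega) (by omega)
    have hAe : A ^ (κ * e) ≠ 0 := pow_ne_zero _ hA0
    have h4 : A ^ (M + 2) = A ^ c0 := mul_left_cancel₀ hAe h2
    have h5 : A ^ (M + 3) = A ^ c0 := mul_left_cancel₀ hAe h3
    have h6 : A ^ (M + 2) * A = A ^ (M + 2) * 1 := by
      rw [mul_one]
      calc A ^ (M + 2) * A = A ^ (M + 3) := (pow_succ A (M + 2)).symm
        _ = A ^ c0 := h5
        _ = A ^ (M + 2) := h4.symm
    exact hA1 (mul_left_cancel₀ (pow_ne_zero (M + 2) hA0) h6)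
  -- pigeonhole
  have hΨF : ∀ t : Fin (M + 1), (fun n => v (k ^ e * n + X t)) ∈ F := by
    intro t
    rw [hFdef, Set.Finite.mem_toFinset]
    refine ⟨e, X t - 1, ?_, ?_⟩
    · have h1 := hXk t
      have h2 := hX1 t
      have h3 : 0 < k ^ e := pow_pos (by omega) e
      omega
    · funext n
      have h2 := hX1 t
      congr 1
      omega
  obtain ⟨x, -, y, -, hxy, hfeq⟩ :=
    Finset.exists_ne_map_eq_of_card_lt_of_maps_to
      (s := (Finset.univ : Finset (Fin (M + 1)))) (t := F)
      (by rw [Finset.card_univ, Fintype.card_fin]; omega) (fun t _ => hΨF t)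
  have hxyval : (x : ℕ) ≠ (y : ℕ) := fun h => hxy (Fin.val_injective h)
  rcases Nat.lt_or_ge (x : ℕ) (y : ℕ) with h | h
  · exact main x y h hfeq
  · exact main y x (by omega) hfeq.symm

end AuxMult

theorem stmt14 {K : Type*} [Field K] (u : ℕ → K) (h1 : u 1 = 1)
    (hmul : ∀ m n : ℕ, 0 < m → 0 < n → u (m * n) = u m * u n)
    (hfin0 : {p : ℕ | p.Prime ∧ u p = 0}.Finite)
    (d : ℕ)
    (hfin : {p : ℕ | p.Prime ∧ u p ^ d ≠ 0 ∧ u p ^ d ≠ 1}.Finite)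
    (hcard : 2 ≤ {p : ℕ | p.Prime ∧ u p ^ d ≠ 0 ∧ u p ^ d ≠ 1}.ncard)
    (k : ℕ) (hk : 2 ≤ k) :
    ¬ IsAutomatic k (fun n => u (n + 1)) := by
  intro hAuto
  classical
  have hd : d ≠ 0 := by
    rintro rfl
    have hempty : {p : ℕ | p.Prime ∧ u p ^ 0 ≠ 0 ∧ u p ^ 0 ≠ 1} = ∅ := by
      ext p; simp
    rw [hempty, Set.ncard_empty] at hcard
    omega
  set v : ℕ → K := fun n => u n ^ d with hv
  have hv1 : v 1 = 1 := by simp [hv, h1]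
  have hvmul : ∀ m n : ℕ, 0 < m → 0 < n → v (m * n) = v m * v n := by
    intro m n hm hn
    simp only [hv]
    rw [hmul m n hm hn, mul_pow]
  have hSfin : ({p : ℕ | p.Prime ∧ u p = 0} ∪
      {p : ℕ | p.Prime ∧ u p ^ d ≠ 0 ∧ u p ^ d ≠ 1}).Finite := hfin0.union hfin
  set SF := hSfin.toFinset with hSF
  have hSprime : ∀ s ∈ SF, s.Prime := by
    intro s hs
    rw [hSF, Set.Finite.mem_toFinset] at hs
    rcases hs with h | h
    · exact h.1
    · exact h.1
  have hSone : ∀ s : ℕ, s.Prime → s ∉ SF → v s = 1 := by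
    intro s hsp hs
    rw [hSF, Set.Finite.mem_toFinset] at hs
    simp only [Set.mem_union, Set.mem_setOf_eq, not_or, not_and_or] at hs
    obtain ⟨h1', h2'⟩ := hs
    have hu0 : u s ≠ 0 := by
      rcases h1' with h | h
      · exact absurd hsp h
      · exact h
    rcases h2' with h | h | h
    · exact absurd hsp h
    · exact absurd (pow_eq_zero_iff hd |>.mp (not_not.mp h)) hu0
    · exact not_not.mp h
  -- the two bad primes
  have hcard2 : 1 < {p : ℕ | p.Prime ∧ u p ^ d ≠ 0 ∧ u p ^ d ≠ 1}.ncard := by omega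
  rw [Set.one_lt_ncard_iff hfin] at hcard2
  obtain ⟨p, q, hp, hq, hpq⟩ := hcard2
  have hpmem : p ∈ SF := by rw [hSF, Set.Finite.mem_toFinset]; exact Or.inr hp
  have hqmem : q ∈ SF := by rw [hSF, Set.Finite.mem_toFinset]; exact Or.inr hq
  -- kernel of v is finite
  have hker : {w : ℕ → K | ∃ e r : ℕ, r < k ^ e ∧ w = fun n => v (k ^ e * n + r + 1)}.Finite := by
    apply Set.Finite.subset (hAuto.image (fun w => fun n => (w n) ^ d))
    rintro w ⟨e, r, hr, rfl⟩
    exact ⟨fun n => u (k ^ e * n + r + 1), ⟨e, r, hr, rfl⟩, rfl⟩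
  have hk0 : k ≠ 0 := by omega
  by_cases hcase : 2 ≤ ordCompl[p] k
  · exact key_lemma v hv1 hvmul SF hSprime hSone p hp.1 hpmem hp.2.1 hp.2.2
      q hqmem (Ne.symm hpq) k hk hcase hker
  · have hppos : 0 < ordCompl[p] k := Nat.ordCompl_pos p hk0
    have hpc1 : ordCompl[p] k = 1 := by omega
    have hkpow : k = p ^ (k.factorization p) := by
      have h := Nat.ordProj_mul_ordCompl_eq_self k p
      rw [hpc1, mul_one] at h
      exact h.symm
    have hqcase : 2 ≤ ordCompl[q] k := by
      by_contra hq2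
      have hq2pos : 0 < ordCompl[q] k := Nat.ordCompl_pos q hk0
      have hqc1 : ordCompl[q] k = 1 := by omega
      have hkqpow : k = q ^ (k.factorization q) := by
        have h := Nat.ordProj_mul_ordCompl_eq_self k q
        rw [hqc1, mul_one] at h
        exact h.symm
      have hq1 : 1 ≤ k.factorization q := by
        by_contra hcon
        have : k.factorization q = 0 := by omega
        rw [hkqpow, this, pow_zero] at hk
        omega
      have hqk : q ∣ k := by
        rw [hkqpow]
        exact dvd_pow_self q (by omega)
      rw [hkpow] at hqk
      have : q = p := (Nat.prime_dvd_prime_iff_eq hq.1 hp.1).mp (hq.1.dvd_of_dvd_pow hqk)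
      exact hpq this.symm
    exact key_lemma v hv1 hvmul SF hSprime hSone q hq.1 hqmem hq.2.1 hq.2.2
      p hpmem hpq k hk hqcase hker
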